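/- Let L be a symmetric positive definite m×m real matrix, M_z a symmetric positive definite n×n real matrix, z̃ ∈ ℝⁿ, and ζ > 0. Then the block matrix M_θ = [[L, L ⊗ z̃ᵀM_z], [L ⊗ M_z z̃, L ⊗ (ζ²M_z + (M_z z̃)(M_z z̃)ᵀ)]] is symmetric positive definite. -/

import Mathlib

open Matrix Kronecker

section helpers
variable {m n : Type*}

lemma kron_posDef [Fintype m] [Fintype n] [DecidableEq m] [DecidableEq n]
    {A : Matrix m m ℝ} {B : Matrix n n ℝ} (hA : A.PosDef) (hB : B.PosDef) :
    (A ⊗ₖ B).PosDef := by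
  classical
  exact hA.kronecker hB

lemma posDef_smul [Fintype n] {A : Matrix n n ℝ} (hA : A.PosDef) {c : ℝ}
    (hc : 0 < c) : (c • A).PosDef := by
  refine PosDef.of_dotProduct_mulVec_pos ?_ fun x hx => ?_
  · rw [IsHermitian, conjTranspose_smul, hA.1.eq]; simp
  · rw [smul_mulVec, dotProduct_smul]
    exact mul_pos hc (hA.dotProduct_mulVec_pos hx)

lemma posDef_fromBlocks_diag [Fintype m] [Fintype n]
    {A : Matrix m m ℝ} {D : Matrix n n ℝ} (hA : A.PosDef) (hD : D.PosDef) :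
    (fromBlocks A 0 0 D).PosDef := by
  refine PosDef.of_dotProduct_mulVec_pos ?_ fun x hx => ?_
  · rw [IsHermitian, fromBlocks_conjTranspose, hA.1.eq, hD.1.eq]; simp
  · have hx' : x = Sum.elim (x ∘ Sum.inl) (x ∘ Sum.inr) := (Sum.elim_comp_inl_inr x).symm
    rw [hx', fromBlocks_mulVec]
    simp only [zero_mulVec, add_zero, zero_add]
    rw [show star (Sum.elim (x ∘ Sum.inl) (x ∘ Sum.inr)) =
      Sum.elim (star (x ∘ Sum.inl)) (star (x ∘ Sum.inr)) by ext (i | i) <;> simp,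
      sumElim_dotProduct_sumElim]
    rcases (by
      by_contra h
      push_neg at h
      apply hx
      ext (i | i)
      · exact congrFun h.1 i
      · exact congrFun h.2 i : x ∘ Sum.inl ≠ 0 ∨ x ∘ Sum.inr ≠ 0) with h | h
    · exact add_pos_of_pos_of_nonneg (hA.dotProduct_mulVec_pos h) (hD.posSemidef.dotProduct_mulVec_nonneg _)
    · exact add_pos_of_nonneg_of_pos (hA.posSemidef.dotProduct_mulVec_nonneg _) (hD.dotProduct_mulVec_pos h)

lemma posDef_conj [Fintype n] [DecidableEq n] {D : Matrix n n ℝ}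
    (hD : D.PosDef) {E : Matrix n n ℝ} (hE : IsUnit E) : (Eᴴ * D * E).PosDef := by
  refine PosDef.of_dotProduct_mulVec_pos (isHermitian_conjTranspose_mul_mul E hD.1) fun x hx => ?_
  have hEx : E *ᵥ x ≠ 0 := fun h => hx (Matrix.mulVec_injective_iff_isUnit.mpr hE (by simp [h]))
  simpa only [star_mulVec, dotProduct_mulVec, vecMul_vecMul] using hD.dotProduct_mulVec_pos hEx

end helpers


/-- The block matrix `M_θ = [[L, L ⊗ z̃ᵀM_z], [L ⊗ M_z z̃, L ⊗ (ζ²M_z + (M_z z̃)(M_z z̃)ᵀ)]]`,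
with the Kronecker-product blocks written entrywise. -/
noncomputable def Mtheta {m n : ℕ} (L : Matrix (Fin m) (Fin m) ℝ)
    (Mz : Matrix (Fin n) (Fin n) ℝ) (zt : Fin n → ℝ) (ζ : ℝ) :
    Matrix (Fin m ⊕ Fin m × Fin n) (Fin m ⊕ Fin m × Fin n) ℝ :=
  Matrix.fromBlocks L
    (Matrix.of fun i jk => L i jk.1 * (Matrix.vecMul zt Mz) jk.2)
    (Matrix.of fun ik j => L ik.1 j * (Mz.mulVec zt) ik.2)
    (Matrix.of fun ik jl => L ik.1 jl.1 *
      (ζ ^ 2 * Mz ik.2 jl.2 + (Mz.mulVec zt) ik.2 * (Mz.mulVec zt) jl.2))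

theorem stmt0 {m n : ℕ} (L : Matrix (Fin m) (Fin m) ℝ) (Mz : Matrix (Fin n) (Fin n) ℝ)
    (zt : Fin n → ℝ) (ζ : ℝ) (hL : L.PosDef) (hMz : Mz.PosDef) (hζ : 0 < ζ) :
    (Mtheta L Mz zt ζ).PosDef := by
  classical
  set v : Fin n → ℝ := Mz.mulVec zt with hv
  have hvm : Matrix.vecMul zt Mz = v := by
    rw [← mulVec_transpose, ← conjTranspose_eq_transpose_of_trivial, hMz.1.eq, hv]
  set W : Matrix (Fin m) (Fin m × Fin n) ℝ :=
    Matrix.of fun i jl => if i = jl.1 then v jl.2 else 0 with hW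
  set E : Matrix (Fin m ⊕ Fin m × Fin n) (Fin m ⊕ Fin m × Fin n) ℝ :=
    fromBlocks 1 W 0 1 with hE
  set D : Matrix (Fin m ⊕ Fin m × Fin n) (Fin m ⊕ Fin m × Fin n) ℝ :=
    fromBlocks L 0 0 ((ζ ^ 2) • (L ⊗ₖ Mz)) with hD
  have hEunit : IsUnit E := by
    rw [isUnit_iff_isUnit_det, hE, det_fromBlocks_zero₂₁]
    simp
  have hfact : Mtheta L Mz zt ζ = Eᴴ * D * E := by
    rw [hE, hD, fromBlocks_conjTranspose, fromBlocks_multiply, fromBlocks_multiply]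
    simp only [conjTranspose_one, conjTranspose_zero, Matrix.mul_one, Matrix.one_mul,
      Matrix.mul_zero, Matrix.zero_mul, add_zero, zero_add]
    unfold Mtheta
    rw [hvm]
    ext (i | ⟨i, k⟩) (j | ⟨j, l⟩) <;>
      simp [fromBlocks, mul_apply, hW, kroneckerMap_apply, Finset.mul_sum,
        Fintype.sum_prod_type, mul_ite, ite_mul, Finset.sum_ite_eq, Finset.sum_ite_eq'] <;>
      ring
  rw [hfact]
  exact posDef_conj
    (posDef_fromBlocks_diag hL (posDef_smul (kron_posDef hL hMz) (by positivity))) hEunit
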